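/- For every natural number n, the integral over the real line of (H_{2n+1}(x)/x)^2 e^{-x^2} dx equals √π · 2^{2n+2} · (2n+1)!, where H_k denotes the k-th (physicists') Hermite polynomial. (Note H_{2n+1}(0) = 0, so H_{2n+1}(x)/x is a polynomial.) -/

import Mathlib

open MeasureTheory Real

/-- The physicists' Hermite polynomials, defined by
`H_{n+1}(x) = 2x H_n(x) - 2n H_{n-1}(x)` with `H_0 = 1`, `H_1 = 2x`. -/
noncomputable def hermiteH : ℕ → ℝ → ℝ
  | 0, _ => 1
  | 1, x => 2 * x
  | n + 2, x => 2 * x * hermiteH (n + 1) x - 2 * ((n : ℝ) + 1) * hermiteH n x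

open Polynomial in
noncomputable def HP : ℕ → Polynomial ℝ
  | 0 => 1
  | 1 => C 2 * X
  | n + 2 => C 2 * X * HP (n + 1) - C (2 * ((n : ℝ) + 1)) * HP n

open Polynomial

lemma hermiteH_eval : ∀ (n : ℕ) (x : ℝ), hermiteH n x = (HP n).eval x
  | 0, x => by simp [hermiteH, HP]
  | 1, x => by simp [hermiteH, HP]
  | n + 2, x => by
      simp [hermiteH, HP, hermiteH_eval (n + 1) x, hermiteH_eval n x]

lemma HP_natDegree_le : ∀ n : ℕ, (HP n).natDegree ≤ n
  | 0 => by simp [HP]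
  | 1 => by simp [HP]
  | n + 2 => by
      rw [HP]
      refine (natDegree_sub_le _ _).trans (max_le ?_ ?_)
      · refine (natDegree_mul_le).trans ?_
        have := HP_natDegree_le (n + 1)
        have h2 : (C (2:ℝ) * X).natDegree ≤ 1 := (natDegree_C_mul_le _ _).trans (by simp)
        omega
      · refine (natDegree_C_mul_le _ _).trans ?_
        have := HP_natDegree_le n; omega

lemma HP_coeff_self : ∀ n : ℕ, (HP n).coeff n = 2 ^ n
  | 0 => by simp [HP]
  | 1 => by simp [HP]
  | n + 2 => by
      have h1 := HP_coeff_self (n + 1)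
      have h0 : (HP n).coeff (n + 2) = 0 :=
        coeff_eq_zero_of_natDegree_lt (lt_of_le_of_lt (HP_natDegree_le n) (by omega))
      rw [HP, coeff_sub, mul_assoc, coeff_C_mul, coeff_C_mul, h0, mul_zero, sub_zero,
        coeff_X_mul, h1]
      ring

lemma HP_deriv : ∀ n : ℕ, derivative (HP (n + 1)) = C (2 * ((n : ℝ) + 1)) * HP n
  | 0 => by simp [HP]
  | 1 => by
      show derivative (HP (0 + 2)) = _
      rw [HP]
      simp [HP]
      ring
  | n + 2 => by
      show derivative (HP ((n + 1) + 2)) = _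
      rw [HP, derivative_sub, derivative_mul, derivative_mul, derivative_mul,
        HP_deriv (n + 1), HP_deriv n, show (n:ℕ) + 2 = n + 2 from rfl,
        show ((n:ℕ) + 1) + 1 = n + 2 from rfl, HP]
      push_cast
      simp only [derivative_add, derivative_mul, derivative_ofNat, derivative_C, derivative_X, derivative_one, map_mul, map_add, map_one, map_ofNat]
      ring

lemma HP_succ' (n : ℕ) : HP (n + 1) = C 2 * X * HP n - derivative (HP n) := by
  cases n with
  | zero => simp [HP]
  | succ m => rw [HP_deriv m, show m + 1 + 1 = m + 2 from rfl, HP]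

lemma HP_coeff_zero_odd : ∀ n : ℕ, (HP (2 * n + 1)).coeff 0 = 0
  | 0 => by simp [HP]
  | n + 1 => by
      have h := HP_coeff_zero_odd n
      rw [show 2 * (n + 1) + 1 = (2 * n + 1) + 2 from by ring, HP, coeff_sub, coeff_C_mul,
        mul_assoc, coeff_C_mul, mul_coeff_zero, coeff_X_zero, h]
      ring

lemma pow_le_fact_exp {t : ℝ} (ht : 0 ≤ t) (n : ℕ) : t ^ n ≤ n.factorial * Real.exp t := by
  have h := Real.sum_le_exp_of_nonneg ht (n + 1)
  have h2 : t ^ n / n.factorial ≤ Real.exp t :=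
    le_trans (Finset.single_le_sum (f := fun i => t ^ i / i.factorial)
      (fun i _ => by positivity) (Finset.self_mem_range_succ n)) h
  rw [div_le_iff₀ (by positivity)] at h2
  linarith [h2]

lemma integrable_pow_gaussian (n : ℕ) :
    Integrable fun x : ℝ => x ^ n * Real.exp (-x ^ 2) := by
  have hg : Integrable (fun x : ℝ => Real.exp (-(1 : ℝ) * x ^ 2)
      + 2 ^ n * n.factorial * Real.exp (-(1 / 2 : ℝ) * x ^ 2)) :=
    (integrable_exp_neg_mul_sq one_pos).add
      ((integrable_exp_neg_mul_sq (by norm_num)).const_mul _)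
  refine hg.mono' ?_ ?_
  · exact ((continuous_pow n).mul (Real.continuous_exp.comp
      (continuous_pow 2).neg)).aestronglyMeasurable
  · filter_upwards with x
    have h1 : |x| ^ n ≤ 1 + (x ^ 2) ^ n := by
      rcases le_or_gt (|x|) 1 with h | h
      · have h2 : |x| ^ n ≤ 1 := pow_le_one₀ (abs_nonneg x) h
        have h3 : (0:ℝ) ≤ (x ^ 2) ^ n := by positivity
        linarith
      · have h2 : |x| ^ n ≤ (x ^ 2) ^ n := by
          rw [← sq_abs, ← pow_mul]
          exact pow_le_pow_right₀ h.le (by omega)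
        linarith
    have h3 : (x ^ 2) ^ n ≤ 2 ^ n * n.factorial * Real.exp (x ^ 2 / 2) := by
      have := pow_le_fact_exp (t := x ^ 2 / 2) (by positivity) n
      have h4 : (x ^ 2) ^ n = 2 ^ n * (x ^ 2 / 2) ^ n := by
        rw [div_pow, ← mul_div_assoc, mul_comm, mul_div_assoc, div_self (by positivity), mul_one]
      rw [h4, mul_assoc]
      exact mul_le_mul_of_nonneg_left this (by positivity)
    have hexp : (0:ℝ) < Real.exp (-x ^ 2) := Real.exp_pos _
    rw [norm_mul, norm_pow, Real.norm_eq_abs, Real.norm_eq_abs,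
      abs_of_pos hexp]
    calc |x| ^ n * Real.exp (-x ^ 2)
        ≤ (1 + 2 ^ n * n.factorial * Real.exp (x ^ 2 / 2)) * Real.exp (-x ^ 2) := by
          apply mul_le_mul_of_nonneg_right _ hexp.le
          exact h1.trans (by linarith)
      _ = Real.exp (-(1:ℝ) * x ^ 2) + 2 ^ n * n.factorial * Real.exp (-(1/2 : ℝ) * x ^ 2) := by
          rw [add_mul, mul_assoc, ← Real.exp_add]
          ring_nf
      _ = Real.exp (-(1:ℝ) * x ^ 2) + 2 ^ n * ↑n.factorial * Real.exp (-(1/2:ℝ) * x ^ 2) := rfl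

lemma integrable_poly_gaussian (p : Polynomial ℝ) :
    Integrable fun x : ℝ => eval x p * Real.exp (-x ^ 2) := by
  have h : (fun x : ℝ => eval x p * Real.exp (-x ^ 2))
      = fun x => ∑ i ∈ Finset.range (p.natDegree + 1),
          p.coeff i * (x ^ i * Real.exp (-x ^ 2)) := by
    funext x
    rw [eval_eq_sum_range, Finset.sum_mul]
    exact Finset.sum_congr rfl fun i _ => by ring
  rw [h]
  exact integrable_finset_sum _ fun i _ => (integrable_pow_gaussian i).const_mul _

lemma step_int (p : Polynomial ℝ) (n : ℕ) :
    ∫ x : ℝ, eval x p * (eval x (HP (n + 1)) * Real.exp (-x ^ 2))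
      = ∫ x : ℝ, eval x (derivative p) * (eval x (HP n) * Real.exp (-x ^ 2)) := by
  have hu : ∀ x : ℝ, HasDerivAt (fun y => eval y p) (eval x (derivative p)) x :=
    fun x => p.hasDerivAt x
  have hexp : ∀ x : ℝ, HasDerivAt (fun y : ℝ => Real.exp (-y ^ 2))
      (Real.exp (-x ^ 2) * -(2 * x)) x := by
    intro x
    have h1 : HasDerivAt (fun y : ℝ => -y ^ 2) (-(2 * x)) x := by
      simpa using (hasDerivAt_pow 2 x).fun_neg
    exact h1.exp
  have hv : ∀ x : ℝ, HasDerivAt (fun y => eval y (HP n) * Real.exp (-y ^ 2))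
      (-(eval x (HP (n + 1)) * Real.exp (-x ^ 2))) x := by
    intro x
    have h := ((HP n).hasDerivAt x).mul (hexp x)
    refine h.congr_deriv ?_
    rw [HP_succ' n]
    simp only [eval_sub, eval_mul, eval_C, eval_X]
    ring
  have hig : ∀ q : Polynomial ℝ, Integrable fun x : ℝ => eval x q * Real.exp (-x ^ 2) :=
    integrable_poly_gaussian
  have h1 : Integrable ((fun y => eval y p) * fun x => -(eval x (HP (n + 1)) * Real.exp (-x ^ 2))) := by
    have := ((hig (p * HP (n + 1))).neg)
    refine this.congr (by filter_upwards with x; simp [eval_mul]; ring)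
  have h2 : Integrable ((fun x => eval x (derivative p)) * fun y => eval y (HP n) * Real.exp (-y ^ 2)) := by
    refine (hig (derivative p * HP n)).congr (by filter_upwards with x; simp [eval_mul]; ring)
  have h3 : Integrable ((fun y => eval y p) * fun y => eval y (HP n) * Real.exp (-y ^ 2)) := by
    refine (hig (p * HP n)).congr (by filter_upwards with x; simp [eval_mul]; ring)
  have key := MeasureTheory.integral_mul_deriv_eq_deriv_mul_of_integrable (fun x _ => hu x) (fun x _ => hv x) h1 h2 h3
  simp only [mul_neg] at key
  rw [integral_neg, neg_inj] at key
  exact key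

lemma iter_int (n : ℕ) : ∀ p : Polynomial ℝ,
    ∫ x : ℝ, eval x p * (eval x (HP n) * Real.exp (-x ^ 2))
      = ∫ x : ℝ, eval x ((⇑derivative)^[n] p) * Real.exp (-x ^ 2) := by
  induction n with
  | zero => intro p; simp [HP]
  | succ m ih =>
      intro p
      rw [step_int p m, ih (derivative p), ← Function.iterate_succ_apply]

lemma orth {p : Polynomial ℝ} {n : ℕ} (h : p.natDegree < n) :
    ∫ x : ℝ, eval x p * (eval x (HP n) * Real.exp (-x ^ 2)) = 0 := by
  rw [iter_int, iterate_derivative_eq_zero h]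
  simp

lemma gauss_int : ∫ x : ℝ, Real.exp (-x ^ 2) = Real.sqrt π := by
  have := integral_gaussian 1
  simpa using this

lemma HP_norm (n : ℕ) :
    ∫ x : ℝ, eval x (HP n) * (eval x (HP n) * Real.exp (-x ^ 2))
      = Real.sqrt π * 2 ^ n * (n.factorial : ℝ) := by
  rw [iter_int]
  have hd : (⇑derivative)^[n] (HP n) = C ((2 : ℝ) ^ n * n.factorial) := by
    have hdeg : ((⇑derivative)^[n] (HP n)).natDegree ≤ 0 := by
      have := Polynomial.natDegree_iterate_derivative (HP n) n
      have := HP_natDegree_le n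
      omega
    rw [eq_C_of_natDegree_le_zero hdeg, coeff_iterate_derivative]
    rw [zero_add, Nat.descFactorial_self, HP_coeff_self]
    simp [mul_comm]
  rw [hd]
  simp only [eval_C]
  rw [MeasureTheory.integral_const_mul, gauss_int]
  ring

noncomputable def Q (n : ℕ) : Polynomial ℝ := (HP (2 * n + 1)).divX

lemma X_mul_Q (n : ℕ) : X * Q n = HP (2 * n + 1) := by
  have h := X_mul_divX_add (HP (2 * n + 1))
  rwa [HP_coeff_zero_odd, map_zero, add_zero] at h

lemma Q_zero : Q 0 = C 2 := by
  apply mul_left_cancel₀ (X_ne_zero : (X : Polynomial ℝ) ≠ 0)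
  rw [X_mul_Q]
  show HP 1 = _
  rw [HP]; ring

lemma Q_natDegree_le (n : ℕ) : (Q n).natDegree ≤ 2 * n := by
  by_cases h : Q n = 0
  · simp [h]
  · have h1 : (X * Q n).natDegree = 1 + (Q n).natDegree := by
      rw [natDegree_mul X_ne_zero h, natDegree_X]
    rw [X_mul_Q] at h1
    have := HP_natDegree_le (2 * n + 1)
    omega

lemma Q_succ (n : ℕ) :
    Q (n + 1) = C 2 * HP (2 * n + 2) - C (2 * (2 * (n : ℝ) + 2)) * Q n := by
  apply mul_left_cancel₀ (X_ne_zero : (X : Polynomial ℝ) ≠ 0)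
  rw [X_mul_Q, show 2 * (n + 1) + 1 = (2 * n + 1) + 2 from by ring, HP]
  rw [mul_sub, mul_left_comm X (C 2), mul_left_comm X (C (2 * (2 * (n : ℝ) + 2))), X_mul_Q n]
  push_cast
  ring

lemma Q_int : ∀ n : ℕ, ∫ x : ℝ, eval x (Q n) * (eval x (Q n) * Real.exp (-x ^ 2))
    = Real.sqrt π * 2 ^ (2 * n + 2) * ((2 * n + 1).factorial : ℝ) := by
  intro n
  induction n with
  | zero =>
      simp only [Q_zero, eval_C]
      have h : ∀ x : ℝ, (2:ℝ) * (2 * Real.exp (-x ^ 2)) = 4 * Real.exp (-x ^ 2) :=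
        fun x => by ring
      simp_rw [h]
      rw [MeasureTheory.integral_const_mul, gauss_int]
      norm_num [Nat.factorial]
      ring
  | succ m ih =>
      rw [Q_succ m]
      set a : ℝ := 2 * (2 * (m : ℝ) + 2) with ha
      have hsplit : (fun x : ℝ =>
          eval x (C 2 * HP (2 * m + 2) - C a * Q m)
            * (eval x (C 2 * HP (2 * m + 2) - C a * Q m) * Real.exp (-x ^ 2)))
          = fun x : ℝ =>
            4 * (eval x (HP (2 * m + 2)) * (eval x (HP (2 * m + 2)) * Real.exp (-x ^ 2)))
            - (4 * a) * (eval x (Q m) * (eval x (HP (2 * m + 2)) * Real.exp (-x ^ 2)))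
            + a ^ 2 * (eval x (Q m) * (eval x (Q m) * Real.exp (-x ^ 2))) := by
        funext x
        simp only [eval_sub, eval_mul, eval_C]
        ring
      rw [hsplit]
      have ig2 : ∀ (c : ℝ) (p q : Polynomial ℝ),
          Integrable fun x : ℝ => c * (eval x p * (eval x q * Real.exp (-x ^ 2))) := by
        intro c p q
        refine ((integrable_poly_gaussian (p * q)).const_mul c).congr ?_
        filter_upwards with x
        simp only [eval_mul]
        ring
      rw [MeasureTheory.integral_add
          (f := fun x : ℝ =>
            4 * (eval x (HP (2 * m + 2)) * (eval x (HP (2 * m + 2)) * Real.exp (-x ^ 2)))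
            - 4 * a * (eval x (Q m) * (eval x (HP (2 * m + 2)) * Real.exp (-x ^ 2))))
          (g := fun x : ℝ =>
            a ^ 2 * (eval x (Q m) * (eval x (Q m) * Real.exp (-x ^ 2))))
          ((ig2 4 _ _).sub (ig2 (4 * a) (Q m) (HP (2 * m + 2)))) (ig2 _ _ _),
        MeasureTheory.integral_sub
          (f := fun x : ℝ =>
            4 * (eval x (HP (2 * m + 2)) * (eval x (HP (2 * m + 2)) * Real.exp (-x ^ 2))))
          (g := fun x : ℝ =>
            4 * a * (eval x (Q m) * (eval x (HP (2 * m + 2)) * Real.exp (-x ^ 2))))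
          (ig2 _ _ _) (ig2 (4 * a) (Q m) (HP (2 * m + 2))),
        MeasureTheory.integral_const_mul, MeasureTheory.integral_const_mul,
        MeasureTheory.integral_const_mul,
        HP_norm (2 * m + 2),
        orth (lt_of_le_of_lt (Q_natDegree_le m) (by omega)), ih]
      have h1 : ((2 * m + 2).factorial : ℝ) = (2 * (m:ℝ) + 2) * (2 * m + 1).factorial := by
        rw [show 2 * m + 2 = (2 * m + 1) + 1 from rfl, Nat.factorial_succ]
        push_cast
        ring
      have h2 : ((2 * (m + 1) + 1).factorial : ℝ)
          = (2 * (m:ℝ) + 3) * ((2 * (m:ℝ) + 2) * (2 * m + 1).factorial) := by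
        rw [show 2 * (m + 1) + 1 = (2 * m + 2) + 1 from by ring, Nat.factorial_succ]
        push_cast
        rw [h1]
        ring
      rw [h1, h2, show 2 * (m + 1) + 2 = (2 * m + 2) + 2 from by ring, ha]
      ring

lemma ae_ne_zero : ∀ᵐ x : ℝ ∂volume, x ≠ 0 := by
  refine MeasureTheory.ae_iff.mpr ?_
  simp only [ne_eq, not_not, Set.setOf_eq_eq_singleton]
  exact measure_singleton 0

theorem hermite_odd_filter_integral (n : ℕ) :
    ∫ x : ℝ, (hermiteH (2 * n + 1) x / x) ^ 2 * Real.exp (-x ^ 2)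
      = Real.sqrt π * 2 ^ (2 * n + 2) * ((2 * n + 1).factorial : ℝ) := by
  have hae : (fun x : ℝ => (hermiteH (2 * n + 1) x / x) ^ 2 * Real.exp (-x ^ 2))
      =ᵐ[volume] fun x : ℝ => eval x (Q n) * (eval x (Q n) * Real.exp (-x ^ 2)) := by
    filter_upwards [ae_ne_zero] with x hx
    rw [hermiteH_eval, ← X_mul_Q, eval_mul, eval_X, mul_div_cancel_left₀ _ hx]
    ring
  rw [MeasureTheory.integral_congr_ae hae, Q_int n]
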